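/- Let G be a finite non-nilpotent group all of whose proper subgroups are abelian. Then G = P ⋊ Q where Q is a cyclic Sylow q-subgroup, P is a Sylow p-subgroup which is elementary abelian and equals the commutator subgroup G', for distinct primes p and q. -/

import Mathlib

section Aux

variable {G : Type*} [Group G]

lemma aux_nilpotent_of_forall_comm (h : ∀ a b : G, a * b = b * a) : Group.IsNilpotent G :=
  ⟨1, by
    rw [upperCentralSeries_one]
    exact (Subgroup.eq_top_iff' _).2 fun x => Subgroup.mem_center_iff.2 fun g => h g x⟩

lemma aux_comm_of_sup_eq_top {K H : Subgroup G} [K.Normal] (hsup : K ⊔ H = ⊤)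
    (hK : ∀ a ∈ K, ∀ b ∈ K, a * b = b * a)
    (hH : ∀ a ∈ H, ∀ b ∈ H, a * b = b * a)
    (hX : ∀ a ∈ K, ∀ b ∈ H, a * b = b * a) (x y : G) : x * y = y * x := by
  have hmem : ∀ z : G, ∃ a ∈ K, ∃ b ∈ H, a * b = z := by
    intro z
    have hz : z ∈ (↑(K ⊔ H) : Set G) := by rw [hsup]; exact Set.mem_univ z
    rw [Subgroup.normal_mul] at hz
    exact Set.mem_mul.mp hz
  obtain ⟨a, ha, b, hb, rfl⟩ := hmem x
  obtain ⟨c, hc, d, hd, rfl⟩ := hmem y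
  have hac : Commute a c := hK a ha c hc
  have had : Commute a d := hX a ha d hd
  have hbc : Commute b c := (hX c hc b hb).symm
  have hbd : Commute b d := hH b hb d hd
  exact (hac.mul_right had).mul_left (hbc.mul_right hbd)

end Aux

open scoped IsMulCommutative
open scoped commutatorElement

theorem stmt0 {G : Type*} [Group G] [Finite G]
    (hnil : ¬ Group.IsNilpotent G)
    (hprop : ∀ H : Subgroup G, H < ⊤ → IsMulCommutative H) :
    ∃ (p q : ℕ), p.Prime ∧ q.Prime ∧ p ≠ q ∧
      ∃ (P : Sylow p G) (Q : Sylow q G),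
        (P : Subgroup G).Normal ∧ IsCyclic ↥(Q : Subgroup G) ∧
        (P : Subgroup G) = commutator G ∧
        IsMulCommutative (P : Subgroup G) ∧ (∀ x ∈ (P : Subgroup G), x ^ p = 1) ∧
        (P : Subgroup G) ⊓ (Q : Subgroup G) = ⊥ ∧
        (P : Subgroup G) ⊔ (Q : Subgroup G) = ⊤ := by
  classical
  have hGcomm : ¬ ∀ a b : G, a * b = b * a := fun h => hnil (aux_nilpotent_of_forall_comm h)
  -- obtain a non-normal Sylow subgroup
  have h4 : ¬ ∀ (q : ℕ) (_ : Fact q.Prime) (Q : Sylow q G), (↑Q : Subgroup G).Normal := by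
    intro h
    exact hnil (((isNilpotent_of_finite_tfae (G := G)).out 0 3).mpr h)
  push_neg at h4
  obtain ⟨q, hq, Q, hQn⟩ := h4
  haveI := hq
  -- the normalizer of Q is a proper subgroup, hence abelian
  have hNorm : Subgroup.normalizer ((Q : Subgroup G) : Set G) ≠ ⊤ := fun h => hQn (Subgroup.normalizer_eq_top_iff.mp h)
  haveI hNcomm : IsMulCommutative (Subgroup.normalizer ((Q : Subgroup G) : Set G)) :=
    hprop _ (lt_top_iff_ne_top.2 hNorm)
  have hP : Subgroup.normalizer ((Q : Subgroup G) : Set G) ≤ Subgroup.centralizer (Q : Set G) := by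
    intro g hg
    rw [Subgroup.mem_centralizer_iff]
    intro h hh
    exact Subgroup.mul_comm_of_mem_isMulCommutative _ (Subgroup.le_normalizer hh) hg
  -- Burnside normal complement
  set K : Subgroup G := (MonoidHom.transferSylow Q hP).ker with hKdef
  haveI hKnormal : K.Normal := MonoidHom.normal_ker _
  have hcompl : Subgroup.IsComplement' K (Q : Subgroup G) :=
    MonoidHom.ker_transferSylow_isComplement' Q hP
  have hKQ_inf : K ⊓ (Q : Subgroup G) = ⊥ := hcompl.disjoint.eq_bot
  have hKQ_sup : K ⊔ (Q : Subgroup G) = ⊤ := hcompl.sup_eq_top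
  have hQbot : (Q : Subgroup G) ≠ ⊥ := by
    intro h; rw [h] at hQn; exact hQn inferInstance
  have hKbot : K ≠ ⊥ := by
    intro h; rw [h, bot_sup_eq] at hKQ_sup; rw [hKQ_sup] at hQn; exact hQn inferInstance
  have hKtop : K ≠ ⊤ := by
    intro h
    rw [h, top_inf_eq] at hKQ_inf
    exact hQbot hKQ_inf
  haveI hKcomm : IsMulCommutative K := hprop K (lt_top_iff_ne_top.2 hKtop)
  have hKc : ∀ a ∈ K, ∀ b ∈ K, a * b = b * a := fun a ha b hb =>
    Subgroup.mul_comm_of_mem_isMulCommutative K ha hb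
  -- cardinality facts
  have hcard : Nat.card K * Nat.card (Q : Subgroup G) = Nat.card G := hcompl.card_mul
  have hQcard : Nat.card (Q : Subgroup G) = q ^ (Nat.card G).factorization q :=
    Q.card_eq_multiplicity
  set vq : ℕ := (Nat.card G).factorization q with hvq
  have hcard' : Nat.card K * q ^ vq = Nat.card G := by
    rw [hvq, ← hQcard]; exact hcard
  have hqndvd : ¬ q ∣ Nat.card K := by
    intro hdvd
    have h2 := Nat.pow_succ_factorization_not_dvd (Nat.card_pos (α := G)).ne' hq.out
    rw [← hvq] at h2
    obtain ⟨c, hc⟩ := hdvd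
    exact h2 ⟨c, by rw [← hcard', hc, pow_succ]; ring⟩
  -- choose x ∈ Q with K ⊔ ⟨x⟩ = ⊤
  have hxex : ∃ x ∈ (Q : Subgroup G), K ⊔ Subgroup.zpowers x = ⊤ := by
    by_contra h
    push_neg at h
    have hcross : ∀ a ∈ K, ∀ b ∈ (Q : Subgroup G), a * b = b * a := by
      intro a ha y hy
      haveI := hprop _ (lt_top_iff_ne_top.2 (h y hy))
      exact Subgroup.mul_comm_of_mem_isMulCommutative (K ⊔ Subgroup.zpowers y)
        (Subgroup.mem_sup_left ha) (Subgroup.mem_sup_right (Subgroup.mem_zpowers y))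
    haveI hQcommu : IsMulCommutative (Q : Subgroup G) := by
      refine hprop _ (lt_top_iff_ne_top.2 ?_)
      intro htop
      rw [htop, inf_top_eq] at hKQ_inf
      exact hKbot hKQ_inf
    exact hGcomm (aux_comm_of_sup_eq_top hKQ_sup hKc
      (fun a ha b hb => Subgroup.mul_comm_of_mem_isMulCommutative _ ha hb) hcross)
  obtain ⟨x, hxQ, hxsup⟩ := hxex
  have hzle : Subgroup.zpowers x ≤ (Q : Subgroup G) := Subgroup.zpowers_le.mpr hxQ
  -- trivial intersection kills elements
  have htriv : ∀ g ∈ K, g ∈ (Q : Subgroup G) → g = 1 := by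
    intro g hgK hgQ
    have : g ∈ K ⊓ (Q : Subgroup G) := ⟨hgK, hgQ⟩
    rw [hKQ_inf] at this
    exact Subgroup.mem_bot.mp this
  -- Q = ⟨x⟩
  have hQx : (Q : Subgroup G) = Subgroup.zpowers x := by
    refine le_antisymm ?_ hzle
    intro y hy
    have hy2 : y ∈ (↑(K ⊔ Subgroup.zpowers x) : Set G) := by
      rw [hxsup]; exact Set.mem_univ y
    rw [Subgroup.normal_mul] at hy2
    obtain ⟨k, hk, z, hz, rfl⟩ := hy2
    have hkQ : k ∈ (Q : Subgroup G) := by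
      have := mul_mem hy (inv_mem (hzle hz))
      simpa using this
    rw [htriv k hk hkQ]
    simpa using hz
  -- key dichotomy for normal subgroups of K
  have key : ∀ A : Subgroup G, A.Normal → A ⊔ Subgroup.zpowers x = ⊤ ∨
      ∀ a ∈ A, x * a = a * x := by
    intro A hAn
    by_cases hA : A ⊔ Subgroup.zpowers x = ⊤
    · exact Or.inl hA
    · refine Or.inr fun a ha => ?_
      haveI := hprop _ (lt_top_iff_ne_top.2 hA)
      exact Subgroup.mul_comm_of_mem_isMulCommutative (A ⊔ Subgroup.zpowers x)
        (Subgroup.mem_sup_right (Subgroup.mem_zpowers x)) (Subgroup.mem_sup_left ha)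
  have key2 : ∀ A : Subgroup G, A ≤ K → A.Normal → A ⊔ Subgroup.zpowers x = ⊤ → K ≤ A := by
    intro A hAK hAn htop k hk
    have hk2 : k ∈ (↑(A ⊔ Subgroup.zpowers x) : Set G) := by
      rw [htop]; exact Set.mem_univ k
    haveI := hAn
    rw [Subgroup.normal_mul] at hk2
    obtain ⟨a, haA, z, hz, rfl⟩ := hk2
    have hzK : z ∈ K := by
      have := mul_mem (inv_mem (hAK haA)) hk
      simpa using this
    rw [htriv z hzK (hzle hz)]
    simpa using haA
  have hxne : x ≠ 1 := by
    intro h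
    rw [h, Subgroup.zpowers_one_eq_bot] at hQx
    exact hQbot hQx
  have hordx : orderOf x ∣ q ^ vq := by
    have h1 : orderOf (⟨x, hxQ⟩ : (Q : Subgroup G)) ∣ Nat.card (Q : Subgroup G) :=
      orderOf_dvd_natCard _
    rw [Subgroup.orderOf_mk, hQcard] at h1
    exact h1
  -- x^q commutes with K
  have hxq_comm : ∀ k ∈ K, x ^ q * k = k * x ^ q := by
    have hne : K ⊔ Subgroup.zpowers (x ^ q) ≠ ⊤ := by
      intro htop
      have hx2 : x ∈ (↑(K ⊔ Subgroup.zpowers (x ^ q)) : Set G) := by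
        rw [htop]; exact Set.mem_univ x
      rw [Subgroup.normal_mul] at hx2
      obtain ⟨k, hk, z, hz, hkz⟩ := hx2
      obtain ⟨n, rfl⟩ := Subgroup.mem_zpowers_iff.mp hz
      change k * (x ^ q) ^ n = x at hkz
      have hkQ : k ∈ (Q : Subgroup G) := by
        rw [eq_mul_inv_of_mul_eq hkz]
        exact mul_mem hxQ (inv_mem (zpow_mem (pow_mem hxQ q) n))
      have hk1 : k = 1 := htriv k hk hkQ
      rw [hk1] at hkz
      simp only [one_mul] at hkz
      have hzp : x ^ ((q : ℤ) * n) = x := by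
        rw [zpow_mul, zpow_natCast]; exact hkz
      have h1 : x ^ ((q : ℤ) * n - 1) = 1 := by
        rw [zpow_sub, hzp, zpow_one, mul_inv_cancel]
      have hdvd : (orderOf x : ℤ) ∣ (q : ℤ) * n - 1 := orderOf_dvd_iff_zpow_eq_one.mpr h1
      have hqdvd : (q : ℤ) ∣ (orderOf x : ℤ) := by
        obtain ⟨i, hile, hio⟩ := (Nat.dvd_prime_pow hq.out).mp hordx
        rcases Nat.eq_zero_or_pos i with h0 | hpos
        · rw [h0, pow_zero] at hio
          exact absurd (orderOf_eq_one_iff.mp hio) hxne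
        · exact Int.natCast_dvd_natCast.mpr (hio ▸ dvd_pow_self q hpos.ne')
      have hq1 : (q : ℤ) ∣ 1 := by
        have h2 : (q : ℤ) ∣ (q : ℤ) * n - 1 := hqdvd.trans hdvd
        have h3 : (q : ℤ) ∣ (q : ℤ) * n := dvd_mul_right _ _
        simpa using dvd_sub h3 h2
      have := Int.le_of_dvd one_pos hq1
      have h2 := hq.out.two_le
      omega
    haveI := hprop _ (lt_top_iff_ne_top.2 hne)
    intro k hk
    exact Subgroup.mul_comm_of_mem_isMulCommutative _
      (Subgroup.mem_sup_right (Subgroup.mem_zpowers _)) (Subgroup.mem_sup_left hk)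
  -- conjugation endomorphisms of K
  have hconjmem : ∀ (g : G) (k : ↥K), g * (k : G) * g⁻¹ ∈ K := fun g k =>
    hKnormal.conj_mem k.1 k.2 g
  let c : G → (↥K →* ↥K) := fun g =>
    { toFun := fun k => ⟨g * (k : G) * g⁻¹, hconjmem g k⟩
      map_one' := by ext; simp
      map_mul' := by intro a b; ext; show g * ↑(a * b) * g⁻¹ = g * ↑a * g⁻¹ * (g * ↑b * g⁻¹)
                     rw [Subgroup.coe_mul]; group }
  have hc_coe : ∀ (g : G) (k : ↥K), (c g k : G) = g * (k : G) * g⁻¹ := fun g k => rfl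
  have hc_c : ∀ (g h : G) (k : ↥K), c g (c h k) = c (g * h) k := by
    intro g h k; ext
    show g * (h * ↑k * h⁻¹) * g⁻¹ = g * h * ↑k * (g * h)⁻¹
    group
  have hc_one : ∀ k : ↥K, c 1 k = k := by
    intro k; ext; show (1:G) * (k:G) * (1:G)⁻¹ = (k:G); group
  let δ : ↥K →* ↥K :=
    { toFun := fun k => c x k * k⁻¹
      map_one' := by simp
      map_mul' := by
        intro a b
        simp only [map_mul, mul_inv]
        rw [mul_mul_mul_comm] }
  have hδ_def : ∀ k : ↥K, δ k = c x k * k⁻¹ := fun k => rfl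
  let ν : ↥K →* ↥K := ∏ i ∈ Finset.range q, c (x ^ i)
  have hν_apply : ∀ k : ↥K, ν k = ∏ i ∈ Finset.range q, c (x ^ i) k := fun k =>
    MonoidHom.finset_prod_apply _ _ _
  have hτsucc : ∀ (n : ℕ) (k : ↥K), c (x ^ (n + 1)) k = c (x ^ n) (c x k) := by
    intro n k
    rw [hc_c, ← pow_succ]
  have hτ0 : ∀ k : ↥K, c (x ^ 0) k = k := by
    intro k; rw [pow_zero]; exact hc_one k
  have hτq : ∀ k : ↥K, c (x ^ q) k = k := by
    intro k; ext
    rw [hc_coe, hxq_comm (k : G) k.2, mul_inv_cancel_right]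
  -- telescoping: ν (δ k) = 1
  have hνδ : ∀ k : ↥K, ν (δ k) = 1 := by
    intro k
    rw [hν_apply]
    have hterm : ∀ i, c (x ^ i) (δ k) = c (x ^ (i + 1)) k * (c (x ^ i) k)⁻¹ := by
      intro i
      rw [hδ_def, map_mul, map_inv, hc_c, ← pow_succ]
    rw [Finset.prod_congr rfl fun i _ => hterm i]
    have htel := Finset.prod_range_div (fun i => c (x ^ i) k) q
    simp only [div_eq_mul_inv] at htel
    rw [htel, hτq, hτ0, mul_inv_cancel]
  -- fixed points: ν m = m ^ q
  have hfix : ∀ m : ↥K, δ m = 1 → ν m = m ^ q := by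
    intro m hm
    have hσ : c x m = m := mul_inv_eq_one.mp hm
    have hτi : ∀ i, c (x ^ i) m = m := by
      intro i
      induction i with
      | zero => exact hτ0 m
      | succ n ih => rw [hτsucc, hσ, ih]
    rw [hν_apply, Finset.prod_congr rfl fun i _ => hτi i, Finset.prod_const, Finset.card_range]
  -- coprimality kills q-torsion in K
  have hcop : ∀ m : ↥K, m ^ q = 1 → m = 1 := by
    intro m hm
    have h1 : orderOf m ∣ q := orderOf_dvd_of_pow_eq_one hm
    have h2 : orderOf m ∣ Nat.card ↥K := orderOf_dvd_natCard m
    rcases (Nat.Prime.eq_one_or_self_of_dvd hq.out _ h1) with h | h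
    · exact orderOf_eq_one_iff.mp h
    · exact absurd (h ▸ h2) hqndvd
  -- a subgroup of K invariant under conjugation by x is normal in G
  have hnormal_of : ∀ B : Subgroup ↥K, (∀ k : ↥K, k ∈ B → c x k ∈ B) →
      (∀ k : ↥K, c x k ∈ B → k ∈ B) → (B.map K.subtype).Normal := by
    intro B hB1 hB2
    rw [← Subgroup.normalizer_eq_top_iff, ← top_le_iff, ← hxsup]
    refine sup_le ?_ ?_
    · intro k hk
      rw [Subgroup.mem_normalizer_iff]
      intro h
      constructor
      · intro hh
        obtain ⟨m, hmB, rfl⟩ := Subgroup.mem_map.mp hh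
        refine Subgroup.mem_map.mpr ⟨m, hmB, ?_⟩
        show (m : G) = k * (m : G) * k⁻¹
        rw [hKc k hk (m : G) m.2, mul_inv_cancel_right]
      · intro hh
        obtain ⟨m, hmB, hme⟩ := Subgroup.mem_map.mp hh
        rw [Subgroup.coe_subtype] at hme
        have hhK : h ∈ K := by
          have he : h = k⁻¹ * (m : G) * k := by rw [hme]; group
          rw [he]
          have := hconjmem k⁻¹ m
          rwa [inv_inv] at this
        have heq : K.subtype m = h := by
          rw [Subgroup.coe_subtype, hme, hKc k hk h hhK, mul_inv_cancel_right]
        exact Subgroup.mem_map.mpr ⟨m, hmB, heq⟩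
    · rw [Subgroup.zpowers_le, Subgroup.mem_normalizer_iff]
      intro h
      constructor
      · intro hh
        obtain ⟨m, hmB, rfl⟩ := Subgroup.mem_map.mp hh
        exact Subgroup.mem_map.mpr ⟨c x m, hB1 m hmB, rfl⟩
      · intro hh
        obtain ⟨m, hmB, hme⟩ := Subgroup.mem_map.mp hh
        rw [Subgroup.coe_subtype] at hme
        have hm'K : x⁻¹ * (m : G) * x ∈ K := by
          have := hconjmem x⁻¹ m
          rwa [inv_inv] at this
        set m' : ↥K := ⟨x⁻¹ * (m : G) * x, hm'K⟩ with hm'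
        have hτm' : c x m' = m := by
          ext
          show x * (x⁻¹ * (m : G) * x) * x⁻¹ = (m : G)
          group
        have hm'B : m' ∈ B := hB2 m' (hτm'.symm ▸ hmB)
        refine Subgroup.mem_map.mpr ⟨m', hm'B, ?_⟩
        show x⁻¹ * (m : G) * x = h
        rw [hme]; group
  -- the commutator map δ interacts with conjugation
  have hcδ : ∀ m : ↥K, c x (δ m) = δ (c x m) := by
    intro m
    rw [hδ_def, map_mul, map_inv, hδ_def]
  -- elements of the range of δ fixed by conjugation are trivial
  have hIF : ∀ m : ↥K, m ∈ δ.range → δ m = 1 → m = 1 := by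
    rintro m ⟨k, rfl⟩ hm
    exact hcop _ (((hfix _ hm).symm).trans (hνδ k))
  -- if x centralizes K we get a contradiction
  have hxnotcentral : ¬ (∀ k : ↥K, c x k = k) := by
    intro hcent
    have hcross : ∀ a ∈ K, ∀ b ∈ Subgroup.zpowers x, a * b = b * a := by
      intro a ha b hb
      obtain ⟨n, rfl⟩ := Subgroup.mem_zpowers_iff.mp hb
      have hxa : Commute x a := by
        have := congrArg (Subtype.val) (hcent ⟨a, ha⟩)
        simp only [hc_coe] at this
        exact mul_inv_eq_iff_eq_mul.mp this
      exact ((hxa.zpow_left n).symm).eq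
    exact hGcomm (aux_comm_of_sup_eq_top hxsup hKc
      (fun a ha b hb => by
        obtain ⟨n, rfl⟩ := Subgroup.mem_zpowers_iff.mp ha
        obtain ⟨m, rfl⟩ := Subgroup.mem_zpowers_iff.mp hb
        exact ((Commute.refl x).zpow_zpow n m).eq)
      hcross)
  -- δ maps range into range through conjugation
  have hδc' : ∀ m : ↥K, δ (c x⁻¹ m) = c x⁻¹ (δ m) := by
    intro m
    ext
    simp only [hδ_def, hc_coe, MulMemClass.coe_mul, InvMemClass.coe_inv]
    group
  -- the kernel of δ is trivial
  have hkerδ : δ.ker = ⊥ := by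
    by_contra hne
    have hran1 : ∀ k : ↥K, k ∈ δ.range → c x k ∈ δ.range := by
      rintro k ⟨m, rfl⟩
      exact ⟨c x m, (hcδ m).symm⟩
    have hran2 : ∀ k : ↥K, c x k ∈ δ.range → k ∈ δ.range := by
      intro k hk
      obtain ⟨m, hm⟩ := hk
      refine ⟨c x⁻¹ m, ?_⟩
      rw [hδc', hm, hc_c, inv_mul_cancel, hc_one]
    set A : Subgroup G := δ.range.map K.subtype with hAdef
    have hAnormal : A.Normal := hnormal_of δ.range hran1 hran2
    have hAK : A ≤ K := Subgroup.map_subtype_le _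
    rcases key A hAnormal with htop | hcent
    · have hKA := key2 A hAK hAnormal htop
      have hrtop : δ.range = ⊤ := by
        rw [eq_top_iff]
        intro m _
        have hmem : (m : G) ∈ A := hKA m.2
        obtain ⟨m', hm', hme⟩ := Subgroup.mem_map.mp hmem
        rw [Subgroup.coe_subtype] at hme
        exact (Subtype.ext hme : m' = m) ▸ hm'
      have hsurj : Function.Surjective δ := MonoidHom.range_eq_top.mp hrtop
      have hinj : Function.Injective δ := Finite.injective_iff_surjective.mpr hsurj
      exact hne ((MonoidHom.ker_eq_bot_iff δ).mpr hinj)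
    · have hδ1 : ∀ k : ↥K, δ k = 1 := by
        intro k
        refine hIF (δ k) ⟨k, rfl⟩ ?_
        have hmem : ((δ k : ↥K) : G) ∈ A :=
          Subgroup.mem_map.mpr ⟨δ k, ⟨k, rfl⟩, rfl⟩
        have hcomm := hcent _ hmem
        have hfixed : c x (δ k) = δ k := by
          ext
          rw [hc_coe, hcomm, mul_inv_cancel_right]
        rw [hδ_def, hfixed, mul_inv_cancel]
      exact hxnotcentral fun k => mul_inv_eq_one.mp (hδ1 k)
  have hδinj : Function.Injective δ := (MonoidHom.ker_eq_bot_iff δ).mp hkerδ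
  have hδsurj : Function.Surjective δ := Finite.injective_iff_surjective.mp hδinj
  -- K equals the commutator subgroup
  have hKle : K ≤ commutator G := by
    intro g hg
    obtain ⟨m, hm⟩ := hδsurj ⟨g, hg⟩
    have hgc : g = ⁅x, (m : G)⁆ := by
      have h1 : (x * (m : G) * x⁻¹) * (m : G)⁻¹ = g := congrArg Subtype.val hm
      rw [commutatorElement_def]
      exact h1.symm
    rw [hgc, commutator_def]
    exact Subgroup.commutator_mem_commutator (Subgroup.mem_top x) (Subgroup.mem_top (m : G))
  have hcomm_le : commutator G ≤ K := by
    have hgen : ∀ a : G ⧸ K, ∃ n : ℤ, ((x : G ⧸ K)) ^ n = a := by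
      intro a
      obtain ⟨g, rfl⟩ := QuotientGroup.mk_surjective a
      have hg2 : g ∈ (↑(K ⊔ Subgroup.zpowers x) : Set G) := by
        rw [hxsup]; exact Set.mem_univ g
      rw [Subgroup.normal_mul] at hg2
      obtain ⟨k, hk, z, hz, rfl⟩ := hg2
      obtain ⟨n, rfl⟩ := Subgroup.mem_zpowers_iff.mp hz
      refine ⟨n, ?_⟩
      rw [← QuotientGroup.mk_zpow]
      refine QuotientGroup.eq.mpr ?_
      show (x ^ n)⁻¹ * (k * x ^ n) ∈ K
      have : (x ^ n)⁻¹ * (k * x ^ n) = (x ^ n)⁻¹ * k * ((x ^ n)⁻¹)⁻¹ := by group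
      rw [this]
      exact hKnormal.conj_mem k hk (x ^ n)⁻¹
    have hquot : ∀ a b : G ⧸ K, a * b = b * a := by
      intro a b
      obtain ⟨n, rfl⟩ := hgen a
      obtain ⟨m, rfl⟩ := hgen b
      exact ((Commute.refl _).zpow_zpow n m).eq
    rw [commutator_def, Subgroup.commutator_le]
    intro g1 _ g2 _
    rw [← QuotientGroup.eq_one_iff]
    have : ((⁅g1, g2⁆ : G) : G ⧸ K) = ⁅(g1 : G ⧸ K), (g2 : G ⧸ K)⁆ :=
      map_commutatorElement (QuotientGroup.mk' K) g1 g2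
    rw [this, commutatorElement_eq_one_iff_mul_comm]
    exact hquot _ _
  have hKcommutator : K = commutator G := le_antisymm hKle hcomm_le
  -- the prime p
  have hKcard1 : 1 < Nat.card ↥K := (Subgroup.one_lt_card_iff_ne_bot K).mpr hKbot
  set p : ℕ := (Nat.card ↥K).minFac with hpdef
  have hp : p.Prime := Nat.minFac_prime (by omega)
  haveI hpfact : Fact p.Prime := ⟨hp⟩
  have hpdvd : p ∣ Nat.card ↥K := Nat.minFac_dvd _
  have hpq : p ≠ q := fun h => hqndvd (h ▸ hpdvd)
  haveI : Fintype ↥K := Fintype.ofFinite _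
  obtain ⟨m₀, hm₀⟩ := exists_prime_orderOf_dvd_card (G := ↥K) p
    (by rwa [← Nat.card_eq_fintype_card])
  set B : Subgroup ↥K := (powMonoidHom p : ↥K →* ↥K).ker with hBdef
  have hBmem : ∀ k : ↥K, k ∈ B ↔ k ^ p = 1 := fun k => Iff.rfl
  have hB1 : ∀ k : ↥K, k ∈ B → c x k ∈ B := by
    intro k hk
    rw [hBmem] at hk ⊢
    rw [← map_pow, hk, map_one]
  have hB2 : ∀ k : ↥K, c x k ∈ B → k ∈ B := by
    intro k hk
    rw [hBmem] at hk ⊢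
    have h2 := congrArg (c x⁻¹) hk
    rw [map_one, ← map_pow, hc_c, inv_mul_cancel, hc_one] at h2
    exact h2
  set A : Subgroup G := B.map K.subtype with hAdef2
  have hAnormal : A.Normal := hnormal_of B hB1 hB2
  have hAK : A ≤ K := Subgroup.map_subtype_le _
  have hAbot : A ≠ ⊥ := by
    intro h
    have hmem : (m₀ : G) ∈ A := Subgroup.mem_map.mpr
      ⟨m₀, by rw [hBmem, ← hm₀]; exact pow_orderOf_eq_one m₀, rfl⟩
    rw [h, Subgroup.mem_bot] at hmem
    have h1 : m₀ = 1 := OneMemClass.coe_eq_one.mp hmem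
    rw [h1, orderOf_one] at hm₀
    exact hp.ne_one hm₀.symm
  -- exponent p
  have hexp : ∀ g ∈ K, g ^ p = 1 := by
    rcases key A hAnormal with htop | hcent
    · intro g hg
      have hgA := key2 A hAK hAnormal htop hg
      obtain ⟨m, hm, rfl⟩ := Subgroup.mem_map.mp hgA
      rw [hBmem] at hm
      have := congrArg Subtype.val hm
      simpa using this
    · exfalso
      apply hAbot
      rw [eq_bot_iff]
      intro g hg
      obtain ⟨m, hm, rfl⟩ := Subgroup.mem_map.mp hg
      have hfix : c x m = m := by
        ext
        have hcm : x * (m : G) = (m : G) * x :=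
          hcent (m : G) (Subgroup.mem_map.mpr ⟨m, hm, rfl⟩)
        rw [hc_coe, hcm]
        exact mul_inv_cancel_right _ _
      have hδm : δ m = 1 := by rw [hδ_def, hfix, mul_inv_cancel]
      have hm1 : m = 1 := by
        have h3 : m ∈ δ.ker := MonoidHom.mem_ker.mpr hδm
        rw [hkerδ, Subgroup.mem_bot] at h3
        exact h3
      show K.subtype m ∈ (⊥ : Subgroup G)
      rw [hm1, map_one]
      exact Subgroup.one_mem _
  have hKpgroup : IsPGroup p ↥K := fun k =>
    ⟨1, by
      rw [pow_one]
      exact Subtype.ext (by rw [SubmonoidClass.coe_pow]; exact hexp _ k.2)⟩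
  obtain ⟨P, hKP⟩ := hKpgroup.exists_le_sylow
  obtain ⟨mK, hmK⟩ := IsPGroup.iff_card.mp hKpgroup
  have hPcard : Nat.card ↥(P : Subgroup G) = p ^ (Nat.card G).factorization p :=
    P.card_eq_multiplicity
  have hfact : (Nat.card G).factorization p = mK := by
    have h1 : Nat.card G = p ^ mK * q ^ vq := by rw [← hcard', hmK]
    rw [h1, Nat.factorization_mul (pow_ne_zero _ hp.pos.ne') (pow_ne_zero _ hq.out.pos.ne'),
      hp.factorization_pow, hq.out.factorization_pow]
    simp [Finsupp.single_apply, (Ne.symm hpq)]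
  have hPK : (P : Subgroup G) = K := by
    refine (Subgroup.eq_of_le_of_card_ge hKP (le_of_eq ?_)).symm
    rw [hPcard, hfact, hmK]
  refine ⟨p, q, hp, hq.out, hpq, P, Q, ?_, ?_, ?_, ?_, ?_, ?_, ?_⟩
  · rw [hPK]; exact hKnormal
  · refine ⟨⟨⟨x, hxQ⟩, ?_⟩⟩
    intro y
    have hy : (y : G) ∈ Subgroup.zpowers x := by rw [← hQx]; exact y.2
    obtain ⟨n, hn⟩ := Subgroup.mem_zpowers_iff.mp hy
    exact ⟨n, Subtype.ext (by rw [SubgroupClass.coe_zpow]; exact hn)⟩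
  · rw [hPK]; exact hKcommutator
  · rw [hPK]; exact hKcomm
  · intro g hg
    rw [hPK] at hg
    exact hexp g hg
  · rw [hPK]; exact hKQ_inf
  · rw [hPK]; exact hKQ_sup
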